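/- Let λ > 0, w₀ > 0, d > 0 and θ, θ̂ ∈ [0, π/2). If ŵ₀ > 0 satisfies w(d, ŵ₀) = (cos θ̂/cos θ)·w(d, w₀), then for every y ∈ ℝ one has cos θ̂ · I_G(y·cos θ̂; d, ŵ₀) = cos θ · I_G(y·cos θ; d, w₀). That is, a new source at the same distance d whose beam hits the surface with an arbitrary incidence angle θ̂ and whose waist radius is ŵ₀ creates exactly the same power density distribution across the surface as the original source with incidence angle θ and waist radius w₀. -/

import Mathlib

open Real

/-- Beamwidth of a Gaussian beam with wavelength `lam` and waist radius `w0`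
at propagation distance `z`: `w(z, w₀) = w₀ √(1 + (λ z/(π w₀²))²)`. -/
noncomputable def beamWidth (lam w0 z : ℝ) : ℝ :=
  w0 * Real.sqrt (1 + (lam * z / (π * w0 ^ 2)) ^ 2)

/-- 2D orthogonal Gaussian power density at radial distance `a`, propagation distance `z`. -/
noncomputable def IG (lam a z w0 : ℝ) : ℝ :=
  (Real.sqrt 2 / (Real.sqrt π * beamWidth lam w0 z)) *
    Real.exp (-2 * a ^ 2 / (beamWidth lam w0 z) ^ 2)

/-- Corollary 1: a new source at the same distance `d`, incidence angle θ̂ and waist radius ŵ₀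
with `w(d, ŵ₀) = (cos θ̂ / cos θ) w(d, w₀)` creates the same power density distribution across
the surface as the original source with incidence angle θ and waist radius w₀. -/
theorem equivalent_source_same_density (lam w0 d θ θh hw0' : ℝ)
    (hlam : 0 < lam) (hw0 : 0 < w0) (hd : 0 < d)
    (hθ : θ ∈ Set.Ico 0 (π / 2)) (hθh : θh ∈ Set.Ico 0 (π / 2)) (hw0'pos : 0 < hw0')
    (hEq : beamWidth lam hw0' d = (Real.cos θh / Real.cos θ) * beamWidth lam w0 d) :
    ∀ y : ℝ,
      Real.cos θh * IG lam (y * Real.cos θh) d hw0' =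
        Real.cos θ * IG lam (y * Real.cos θ) d w0 := by
  intro y
  have hc : 0 < Real.cos θ := Real.cos_pos_of_mem_Ioo ⟨by linarith [hθ.1, Real.pi_pos], hθ.2⟩
  have hch : 0 < Real.cos θh := Real.cos_pos_of_mem_Ioo ⟨by linarith [hθh.1, Real.pi_pos], hθh.2⟩
  have hbw : ∀ w : ℝ, 0 < w → 0 < beamWidth lam w d := by
    intro w hw
    exact mul_pos hw (Real.sqrt_pos.2 (by positivity))
  have hw1 : 0 < beamWidth lam hw0' d := hbw _ hw0'pos
  have hw2 : 0 < beamWidth lam w0 d := hbw _ hw0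
  set w1 := beamWidth lam hw0' d
  set w2 := beamWidth lam w0 d
  have key : Real.cos θh * w2 = Real.cos θ * w1 := by
    rw [hEq]; field_simp
  have e2 : (-2 * (y * Real.cos θh) ^ 2 / w1 ^ 2) = (-2 * (y * Real.cos θ) ^ 2 / w2 ^ 2) := by
    rw [div_eq_div_iff (by positivity) (by positivity)]
    have h2 : (Real.cos θh * w2) ^ 2 = (Real.cos θ * w1) ^ 2 := by rw [key]
    linear_combination (-2 * y ^ 2) * h2
  have amp : Real.cos θh * (Real.sqrt 2 / (Real.sqrt π * w1)) =
      Real.cos θ * (Real.sqrt 2 / (Real.sqrt π * w2)) := by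
    have hπ : 0 < Real.sqrt π := Real.sqrt_pos.2 Real.pi_pos
    field_simp
    linear_combination key
  unfold IG
  rw [e2, ← mul_assoc, ← mul_assoc, amp]
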